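/- Let T be a tree (a connected acyclic finite simple graph) with vertex v, let v_1, …, v_k be the vertices of T adjacent to v, and for each 1 ≤ i ≤ k let T_i be the connected component of the graph obtained from T by deleting the edge {v, v_i} that contains v_i. Then for every color c ∈ ℕ, the proper colorings κ of T with κ(v) = c are in bijection with k-tuples (κ_1, …, κ_k) where each κ_i is a proper coloring of T_i with κ_i(v_i) ≠ c; moreover this bijection is given by restriction (κ_i = κ restricted to the vertices of T_i), so it preserves the color multiplicities away from v. -/

import Mathlib

/-- A proper coloring of a simple graph by natural-number colors:
adjacent vertices receive distinct colors. -/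
def SimpleGraph.IsProperNatColoring {V : Type} (G : SimpleGraph V) (κ : V → ℕ) : Prop :=
  ∀ ⦃u w : V⦄, G.Adj u w → κ u ≠ κ w

/-- The chromatic symmetric function of `G`, as a formal power series in the
variables `(x_c)_{c : ℕ}` with integer coefficients: the coefficient on the
exponent vector `d : ℕ →₀ ℕ` is the number of proper colorings `κ` of `G`
with `|κ⁻¹(c)| = d c` for every color `c`. -/
noncomputable def csf {V : Type} (G : SimpleGraph V) : MvPowerSeries ℕ ℤ :=
  fun d => ((Set.ncard {κ : V → ℕ |
    G.IsProperNatColoring κ ∧ ∀ c : ℕ, (κ ⁻¹' {c}).ncard = d c} : ℕ) : ℤ)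

/-- `Zcsf G v c` is the part of the chromatic symmetric function of `G`
counting only the proper colorings `κ` with `κ v = c`. -/
noncomputable def Zcsf {V : Type} (G : SimpleGraph V) (v : V) (c : ℕ) : MvPowerSeries ℕ ℤ :=
  fun d => ((Set.ncard {κ : V → ℕ |
    G.IsProperNatColoring κ ∧ κ v = c ∧ ∀ c' : ℕ, (κ ⁻¹' {c'}).ncard = d c'} : ℕ) : ℤ)

/-- `branchSet T v u` is the vertex set of the connected component containing `u`
of the graph obtained from `T` by deleting the edge `{v, u}`. -/
def branchSet {V : Type} (T : SimpleGraph V) (v u : V) : Set V :=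
  {w : V | (T.deleteEdges {s(v, u)}).Reachable w u}

section Aux

open SimpleGraph

variable {V : Type} [DecidableEq V]

lemma bridge_nr {T : SimpleGraph V} (hT : T.IsTree) {v u : V} (h : T.Adj v u) :
    ¬ (T.deleteEdges {s(v,u)}).Reachable v u := by
  have hb := (isAcyclic_iff_forall_adj_isBridge.mp hT.2) h
  rw [isBridge_iff] at hb
  exact hb

lemma walk_avoids_v {T : SimpleGraph V} (hT : T.IsTree) {v u w : V} (hu : T.Adj v u)
    (p : (T.deleteEdges {s(v,u)}).Walk w u) : v ∉ p.support := by
  intro hv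
  exact bridge_nr hT hu ⟨p.dropUntil v hv⟩

lemma branch_ne {T : SimpleGraph V} (hT : T.IsTree) {v u w : V} (hu : T.Adj v u)
    (hw : w ∈ branchSet T v u) : w ≠ v := by
  rintro rfl
  exact bridge_nr hT hu hw

lemma sym_ne {v u a b : V} (ha : a ≠ v) (hb : b ≠ v) : s(a,b) ≠ s(v,u) := by
  intro h
  rw [Sym2.eq_iff] at h
  rcases h with ⟨rfl,_⟩|⟨rfl,rfl⟩ <;> simp_all

lemma branch_unique {T : SimpleGraph V} (hT : T.IsTree) {v u u' w : V}
    (hu : T.Adj v u) (hu' : T.Adj v u')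
    (hw : w ∈ branchSet T v u) (hw' : w ∈ branchSet T v u') : u = u' := by
  by_contra hne
  obtain ⟨p⟩ := hw'
  have hvp : v ∉ p.support := walk_avoids_v hT hu' p
  -- transfer p to T.deleteEdges {s(v,u)}
  have htr : ∀ e ∈ p.edges, e ∈ (T.deleteEdges {s(v,u)}).edgeSet := by
    intro e he
    have he1 : e ∈ (T.deleteEdges {s(v,u')}).edgeSet := p.edges_subset_edgeSet he
    induction e with
    | h a b =>
      rw [mem_edgeSet] at he1 ⊢
      rw [deleteEdges_adj] at he1 ⊢
      refine ⟨he1.1, ?_⟩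
      have ha : a ∈ p.support := p.fst_mem_support_of_mem_edges he
      have hb : b ∈ p.support := p.snd_mem_support_of_mem_edges he
      simp only [Set.mem_singleton_iff]
      exact sym_ne (fun h => hvp (h ▸ ha)) (fun h => hvp (h ▸ hb))
  have r1 : (T.deleteEdges {s(v,u)}).Reachable w u' := ⟨p.transfer _ htr⟩
  have r2 : (T.deleteEdges {s(v,u)}).Adj v u' := by
    rw [deleteEdges_adj]
    refine ⟨hu', ?_⟩
    simp only [Set.mem_singleton_iff]
    intro h
    rw [Sym2.eq_iff] at h
    rcases h with ⟨_,rfl⟩|⟨rfl,_⟩ <;> simp_all [hu.ne']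
  exact bridge_nr hT hu (r2.reachable.trans (r1.symm.trans hw))

lemma branch_exists {T : SimpleGraph V} (hT : T.IsTree) {v w : V} (hw : w ≠ v) :
    ∃ u, T.Adj v u ∧ w ∈ branchSet T v u := by
  obtain ⟨p0⟩ := hT.1.preconnected v w
  let q : T.Path v w := p0.toPath
  have hnil : ¬ (q : T.Walk v w).Nil := by
    intro h
    exact hw (h.eq.symm)
  rw [SimpleGraph.Walk.not_nil_iff] at hnil
  obtain ⟨u, hadj, r, hr⟩ := hnil
  refine ⟨u, hadj, ?_⟩
  have hvr : v ∉ r.support := by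
    have := q.2.support_nodup
    rw [hr, Walk.support_cons] at this
    exact (List.nodup_cons.mp this).1
  have htr : ∀ e ∈ r.edges, e ∈ (T.deleteEdges {s(v,u)}).edgeSet := by
    intro e he
    induction e with
    | h a b =>
      rw [mem_edgeSet, deleteEdges_adj]
      refine ⟨r.edges_subset_edgeSet he, ?_⟩
      have ha : a ∈ r.support := r.fst_mem_support_of_mem_edges he
      have hb : b ∈ r.support := r.snd_mem_support_of_mem_edges he
      simp only [Set.mem_singleton_iff]
      exact sym_ne (fun h => hvr (h ▸ ha)) (fun h => hvr (h ▸ hb))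
  exact ⟨(r.transfer _ htr).reverse⟩

lemma branch_adj {T : SimpleGraph V} {v u w x : V}
    (hw : w ∈ branchSet T v u) (hadj : T.Adj w x) (hwv : w ≠ v) (hxv : x ≠ v) :
    x ∈ branchSet T v u := by
  have : (T.deleteEdges {s(v,u)}).Adj x w := by
    rw [deleteEdges_adj]
    exact ⟨hadj.symm, by simpa using sym_ne hxv hwv⟩
  exact this.reachable.trans hw

noncomputable def glue (T : SimpleGraph V) (hT : T.IsTree) (v : V) (c : ℕ)
    (K : ∀ u : T.neighborSet v, ↥(branchSet T v (u : V)) → ℕ) : V → ℕ :=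
  fun w => if h : w = v then c else
    (K ⟨(branch_exists hT h).choose, (branch_exists hT h).choose_spec.1⟩)
      ⟨w, (branch_exists hT h).choose_spec.2⟩

lemma glue_v (T : SimpleGraph V) (hT : T.IsTree) (v : V) (c : ℕ) (K) :
    glue T hT v c K v = c := dif_pos rfl

lemma glue_eq (T : SimpleGraph V) (hT : T.IsTree) (v : V) (c : ℕ) (K)
    {w u : V} (hwv : w ≠ v) (hu : T.Adj v u) (hw : w ∈ branchSet T v u) :
    glue T hT v c K w = (K ⟨u, hu⟩) ⟨w, hw⟩ := by
  rw [glue, dif_neg hwv]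
  have h := branch_exists hT hwv
  have he : h.choose = u :=
    branch_unique hT h.choose_spec.1 hu h.choose_spec.2 hw
  subst he
  rfl


end Aux

/-- For a tree `T` with vertex `v` and color `c`, the proper colorings `κ`
of `T` with `κ v = c` are in bijection with tuples, indexed by the neighbors `u` of `v`,
of proper colorings of the branch `T_u` (the component of `T − {v,u}` containing `u`)
giving `u` a color other than `c`; moreover the bijection is given by restriction. -/
theorem colorings_equiv_branch_colorings {V : Type} [Fintype V] [DecidableEq V]
    (T : SimpleGraph V) [DecidableRel T.Adj] (hT : T.IsTree) (v : V) (c : ℕ) :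
    ∃ e : {κ : V → ℕ // T.IsProperNatColoring κ ∧ κ v = c} ≃
        (∀ u : T.neighborSet v,
          {κ : ↥(branchSet T v (u : V)) → ℕ //
            (SimpleGraph.induce (branchSet T v (u : V)) T).IsProperNatColoring κ ∧
            κ ⟨(u : V), by exact SimpleGraph.Reachable.refl (u : V)⟩ ≠ c}),
      ∀ (κ : {κ : V → ℕ // T.IsProperNatColoring κ ∧ κ v = c})
        (u : T.neighborSet v) (w : ↥(branchSet T v (u : V))),
          (e κ u).val w = κ.val (w : V) := by
  classical
  have hNe : ∀ u : T.neighborSet v, T.Adj v u := fun u => u.2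
  refine ⟨⟨fun κ u => ⟨fun w => κ.val w, ?_, ?_⟩,
      fun K => ⟨glue T hT v c (fun u => (K u).val), ?_, glue_v T hT v c _⟩, ?_, ?_⟩,
      fun κ u w => rfl⟩
  · -- properness of restriction
    intro a b hab
    exact κ.2.1 hab
  · -- κ u ≠ c
    intro h
    exact κ.2.1 (hNe u) (κ.2.2.trans h.symm)
  · -- properness of glue
    intro a b hab
    by_cases ha : a = v
    · have hvb : T.Adj v b := ha ▸ hab
      have hbv : b ≠ v := hvb.ne'
      rw [ha, glue_v, glue_eq T hT v c _ hbv hvb (SimpleGraph.Reachable.refl b)]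
      exact fun h => (K ⟨b, hvb⟩).2.2 h.symm
    · by_cases hb : b = v
      · have hva : T.Adj v a := hb ▸ hab.symm
        rw [glue_eq T hT v c _ ha hva (SimpleGraph.Reachable.refl a), hb, glue_v]
        exact (K ⟨a, hva⟩).2.2
      · have h := branch_exists hT ha
        set u₀ := h.choose with hu
        have hu₀ : T.Adj v u₀ := h.choose_spec.1
        have hwa : a ∈ branchSet T v u₀ := h.choose_spec.2
        have hwb : b ∈ branchSet T v u₀ := branch_adj hwa hab ha hb
        rw [glue_eq T hT v c _ ha hu₀ hwa, glue_eq T hT v c _ hb hu₀ hwb]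
        exact (K ⟨u₀, hu₀⟩).2.1 (u := ⟨a, hwa⟩) (w := ⟨b, hwb⟩) hab
  · -- left inverse
    intro κ
    apply Subtype.ext
    funext w
    show glue T hT v c (fun u x => κ.val x.val) w = κ.val w
    by_cases hw : w = v
    · rw [hw, glue_v]
      exact κ.2.2.symm
    · exact glue_eq T hT v c (fun u x => κ.val x.val) hw
        (branch_exists hT hw).choose_spec.1 (branch_exists hT hw).choose_spec.2
  · -- right inverse
    intro K
    funext u
    apply Subtype.ext
    funext w
    show glue T hT v c (fun u' => (K u').val) w.val = (K u).val w
    exact glue_eq T hT v c (fun u' => (K u').val) (branch_ne hT (hNe u) w.2) (hNe u) w.2
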